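/- With the operators E, F, H, X, Y defined on V as above (indexed by 0 ≤ A_1 ≤ A_2 ≤ A_1+2ℓ+1), the relations [E,X] = 0, [F,Y] = 0, [H,X] = ℏX, [H,Y] = -ℏY, [E,Y] = ℏX, and [F,X] = ℏY hold. -/
import Mathlib


attribute [local instance] Classical.propDecidable

noncomputable section

/-- The coefficient field `ℂ(ℏ)`. -/
abbrev Fh : Type := RatFunc ℂ

/-- The generator `ℏ` of `ℂ(ℏ)`. -/
def hb : Fh := RatFunc.X

/-- Admissibility of the index `(A₁, A₂)`: `0 ≤ A₁ ≤ A₂ ≤ A₁ + 2ℓ + 1`. -/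
def Adm (ℓ : ℕ) (A : ℤ × ℤ) : Prop :=
  0 ≤ A.1 ∧ A.1 ≤ A.2 ∧ A.2 ≤ A.1 + (2 * ℓ + 1)

/-- The vector space `V` with basis `|A₁, A₂⟩` indexed by admissible pairs. -/
abbrev V (ℓ : ℕ) : Type := {A : ℤ × ℤ // Adm ℓ A} →₀ Fh

/-- The basis vector `|A₁, A₂⟩`, with out-of-range indices giving `0`. -/
def ket (ℓ : ℕ) (A : ℤ × ℤ) : V ℓ :=
  if h : Adm ℓ A then Finsupp.single ⟨A, h⟩ 1 else 0

/-- `E |A₁,A₂⟩ = |A₁+1, A₂+1⟩`. -/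
def opE (ℓ : ℕ) : V ℓ →ₗ[Fh] V ℓ :=
  Finsupp.lsum Fh fun A =>
    LinearMap.toSpanSingleton Fh (V ℓ) (ket ℓ (A.1.1 + 1, A.1.2 + 1))

/-- `F |A₁,A₂⟩ = A₁ ((2ℓ+1)/2 - A₂) ℏ² |A₁-1, A₂-1⟩`. -/
def opF (ℓ : ℕ) : V ℓ →ₗ[Fh] V ℓ :=
  Finsupp.lsum Fh fun A =>
    LinearMap.toSpanSingleton Fh (V ℓ)
      (((((A.1.1 : ℚ) * ((2 * ℓ + 1) / 2 - (A.1.2 : ℚ)) : ℚ) : Fh) * hb ^ 2) •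
        ket ℓ (A.1.1 - 1, A.1.2 - 1))

/-- `H |A₁,A₂⟩ = (A₁ + A₂ + 1 - (2ℓ+1)/2) ℏ |A₁, A₂⟩`. -/
def opH (ℓ : ℕ) : V ℓ →ₗ[Fh] V ℓ :=
  Finsupp.lsum Fh fun A =>
    LinearMap.toSpanSingleton Fh (V ℓ)
      (((((A.1.1 : ℚ) + (A.1.2 : ℚ) + 1 - (2 * ℓ + 1) / 2 : ℚ) : Fh) * hb) •
        ket ℓ (A.1.1, A.1.2))

/-- `X |A₁,A₂⟩ = ((A₂-A₁-2ℓ-1)/(A₂-A₁-(2ℓ+1)/2)) |A₁,A₂+1⟩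
              + ((A₂-A₁)/(A₂-A₁-(2ℓ+1)/2)) |A₁+1,A₂⟩`. -/
def opX (ℓ : ℕ) : V ℓ →ₗ[Fh] V ℓ :=
  Finsupp.lsum Fh fun A =>
    LinearMap.toSpanSingleton Fh (V ℓ)
      (((((A.1.2 : ℚ) - (A.1.1 : ℚ) - (2 * ℓ + 1)) /
            ((A.1.2 : ℚ) - (A.1.1 : ℚ) - (2 * ℓ + 1) / 2) : ℚ) : Fh) •
          ket ℓ (A.1.1, A.1.2 + 1) +
        ((((A.1.2 : ℚ) - (A.1.1 : ℚ)) /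
            ((A.1.2 : ℚ) - (A.1.1 : ℚ) - (2 * ℓ + 1) / 2) : ℚ) : Fh) •
          ket ℓ (A.1.1 + 1, A.1.2))

/-- `Y |A₁,A₂⟩ = ((A₂-A₁)((2ℓ+1)/2-A₂)ℏ/(A₂-A₁-(2ℓ+1)/2)) |A₁,A₂-1⟩
              + (A₁(2ℓ+1-A₂+A₁)ℏ/(A₂-A₁-(2ℓ+1)/2)) |A₁-1,A₂⟩`. -/
def opY (ℓ : ℕ) : V ℓ →ₗ[Fh] V ℓ :=
  Finsupp.lsum Fh fun A =>
    LinearMap.toSpanSingleton Fh (V ℓ)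
      ((((((A.1.2 : ℚ) - (A.1.1 : ℚ)) * ((2 * ℓ + 1) / 2 - (A.1.2 : ℚ)) /
            ((A.1.2 : ℚ) - (A.1.1 : ℚ) - (2 * ℓ + 1) / 2) : ℚ) : Fh) * hb) •
          ket ℓ (A.1.1, A.1.2 - 1) +
        (((((A.1.1 : ℚ) * (2 * ℓ + 1 - (A.1.2 : ℚ) + (A.1.1 : ℚ))) /
            ((A.1.2 : ℚ) - (A.1.1 : ℚ) - (2 * ℓ + 1) / 2) : ℚ) : Fh) * hb) •
          ket ℓ (A.1.1 - 1, A.1.2))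

/-! ### Auxiliary development: the same operators on the free module `W` over all of `ℤ × ℤ`,
where no boundary conditions arise, plus a transfer principle along the inclusion `V → W`. -/

instance Fh.instCharZero : CharZero Fh :=
  charZero_of_injective_algebraMap
    (((RatFunc.algebraMap_injective ℂ).comp (Polynomial.C_injective (R := ℂ))) :
      Function.Injective
        (((algebraMap (Polynomial ℂ) (RatFunc ℂ)).comp Polynomial.C : ℂ →+* RatFunc ℂ)))

/-- The free module on all of `ℤ × ℤ`. -/
abbrev Wfree : Type := (ℤ × ℤ) →₀ Fh

/-- common denominator -/
def qden (ℓ : ℕ) (A : ℤ × ℤ) : ℚ := (A.2 : ℚ) - (A.1 : ℚ) - (2 * ℓ + 1) / 2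
def qF (ℓ : ℕ) (A : ℤ × ℤ) : ℚ := (A.1 : ℚ) * ((2 * ℓ + 1) / 2 - (A.2 : ℚ))
def qH (ℓ : ℕ) (A : ℤ × ℤ) : ℚ := (A.1 : ℚ) + (A.2 : ℚ) + 1 - (2 * ℓ + 1) / 2
def qX1 (ℓ : ℕ) (A : ℤ × ℤ) : ℚ := ((A.2 : ℚ) - (A.1 : ℚ) - (2 * ℓ + 1)) / qden ℓ A
def qX2 (ℓ : ℕ) (A : ℤ × ℤ) : ℚ := ((A.2 : ℚ) - (A.1 : ℚ)) / qden ℓ A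
def qY1 (ℓ : ℕ) (A : ℤ × ℤ) : ℚ :=
  ((A.2 : ℚ) - (A.1 : ℚ)) * ((2 * ℓ + 1) / 2 - (A.2 : ℚ)) / qden ℓ A
def qY2 (ℓ : ℕ) (A : ℤ × ℤ) : ℚ :=
  ((A.1 : ℚ) * (2 * ℓ + 1 - (A.2 : ℚ) + (A.1 : ℚ))) / qden ℓ A

lemma qden_ne (ℓ : ℕ) (A : ℤ × ℤ) : qden ℓ A ≠ 0 := by
  unfold qden
  intro h
  have h2 : ((2 * (A.2 - A.1) : ℤ) : ℚ) = ((2 * ℓ + 1 : ℤ) : ℚ) := by push_cast; linarith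
  have := Int.cast_injective (α := ℚ) h2
  omega

/-- The operators on `Wfree`. -/
def wE : Wfree →ₗ[Fh] Wfree :=
  Finsupp.lsum Fh fun A => LinearMap.toSpanSingleton Fh Wfree
    (Finsupp.single (A.1 + 1, A.2 + 1) (1 : Fh))
def wF (ℓ : ℕ) : Wfree →ₗ[Fh] Wfree :=
  Finsupp.lsum Fh fun A => LinearMap.toSpanSingleton Fh Wfree
    (((qF ℓ A : Fh) * hb ^ 2) • Finsupp.single (A.1 - 1, A.2 - 1) (1 : Fh))
def wH (ℓ : ℕ) : Wfree →ₗ[Fh] Wfree :=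
  Finsupp.lsum Fh fun A => LinearMap.toSpanSingleton Fh Wfree
    (((qH ℓ A : Fh) * hb) • Finsupp.single A (1 : Fh))
def wX (ℓ : ℕ) : Wfree →ₗ[Fh] Wfree :=
  Finsupp.lsum Fh fun A => LinearMap.toSpanSingleton Fh Wfree
    ((qX1 ℓ A : Fh) • Finsupp.single (A.1, A.2 + 1) (1 : Fh) +
     (qX2 ℓ A : Fh) • Finsupp.single (A.1 + 1, A.2) (1 : Fh))
def wY (ℓ : ℕ) : Wfree →ₗ[Fh] Wfree :=
  Finsupp.lsum Fh fun A => LinearMap.toSpanSingleton Fh Wfree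
    (((qY1 ℓ A : Fh) * hb) • Finsupp.single (A.1, A.2 - 1) (1 : Fh) +
     ((qY2 ℓ A : Fh) * hb) • Finsupp.single (A.1 - 1, A.2) (1 : Fh))

/-! ### ℚ-level identities -/

lemma qden_shift_pp (ℓ : ℕ) (A : ℤ × ℤ) : qden ℓ (A.1 + 1, A.2 + 1) = qden ℓ A := by
  unfold qden; push_cast; ring

lemma qden_shift_mm (ℓ : ℕ) (A : ℤ × ℤ) : qden ℓ (A.1 - 1, A.2 - 1) = qden ℓ A := by
  unfold qden; push_cast; ring

lemma idX1_shift (ℓ : ℕ) (A : ℤ × ℤ) : qX1 ℓ (A.1 + 1, A.2 + 1) = qX1 ℓ A := by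
  unfold qX1; rw [qden_shift_pp]; congr 1; push_cast; ring

lemma idX2_shift (ℓ : ℕ) (A : ℤ × ℤ) : qX2 ℓ (A.1 + 1, A.2 + 1) = qX2 ℓ A := by
  unfold qX2; rw [qden_shift_pp]; congr 1; push_cast; ring

lemma idH_up1 (ℓ : ℕ) (A : ℤ × ℤ) : qH ℓ (A.1, A.2 + 1) = qH ℓ A + 1 := by
  unfold qH; push_cast; ring

lemma idH_up2 (ℓ : ℕ) (A : ℤ × ℤ) : qH ℓ (A.1 + 1, A.2) = qH ℓ A + 1 := by
  unfold qH; push_cast; ring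

lemma idH_dn1 (ℓ : ℕ) (A : ℤ × ℤ) : qH ℓ (A.1, A.2 - 1) = qH ℓ A - 1 := by
  unfold qH; push_cast; ring

lemma idH_dn2 (ℓ : ℕ) (A : ℤ × ℤ) : qH ℓ (A.1 - 1, A.2) = qH ℓ A - 1 := by
  unfold qH; push_cast; ring

lemma idEY1 (ℓ : ℕ) (A : ℤ × ℤ) : qY1 ℓ (A.1 + 1, A.2 + 1) = qY1 ℓ A - qX2 ℓ A := by
  have h := qden_ne ℓ A
  unfold qY1 qX2
  rw [qden_shift_pp]
  field_simp
  push_cast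
  ring

lemma idEY2 (ℓ : ℕ) (A : ℤ × ℤ) : qY2 ℓ (A.1 + 1, A.2 + 1) = qY2 ℓ A - qX1 ℓ A := by
  have h := qden_ne ℓ A
  unfold qY2 qX1
  rw [qden_shift_pp]
  field_simp
  push_cast
  ring

lemma idFY1 (ℓ : ℕ) (A : ℤ × ℤ) :
    qY1 ℓ A * qF ℓ (A.1, A.2 - 1) = qF ℓ A * qY1 ℓ (A.1 - 1, A.2 - 1) := by
  have h := qden_ne ℓ A
  unfold qY1 qF
  rw [qden_shift_mm]
  field_simp
  push_cast
  ring

lemma idFY2 (ℓ : ℕ) (A : ℤ × ℤ) :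
    qY2 ℓ A * qF ℓ (A.1 - 1, A.2) = qF ℓ A * qY2 ℓ (A.1 - 1, A.2 - 1) := by
  have h := qden_ne ℓ A
  unfold qY2 qF
  rw [qden_shift_mm]
  field_simp
  push_cast
  ring

lemma idFX1 (ℓ : ℕ) (A : ℤ × ℤ) :
    qX1 ℓ A * qF ℓ (A.1, A.2 + 1) - qF ℓ A * qX1 ℓ (A.1 - 1, A.2 - 1) = qY2 ℓ A := by
  have h := qden_ne ℓ A
  unfold qX1 qF qY2
  rw [qden_shift_mm]
  field_simp
  push_cast
  ring

lemma idFX2 (ℓ : ℕ) (A : ℤ × ℤ) :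
    qX2 ℓ A * qF ℓ (A.1 + 1, A.2) - qF ℓ A * qX2 ℓ (A.1 - 1, A.2 - 1) = qY1 ℓ A := by
  have h := qden_ne ℓ A
  unfold qX2 qF qY1
  rw [qden_shift_mm]
  field_simp
  push_cast
  ring

/-! ### Fh-level casts of the identities -/

section CastIds
variable (ℓ : ℕ) (A : ℤ × ℤ)

lemma cX1_shift : (qX1 ℓ (A.1 + 1, A.2 + 1) : Fh) = (qX1 ℓ A : Fh) := by
  exact_mod_cast idX1_shift ℓ A
lemma cX2_shift : (qX2 ℓ (A.1 + 1, A.2 + 1) : Fh) = (qX2 ℓ A : Fh) := by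
  exact_mod_cast idX2_shift ℓ A
lemma cH_up1 : (qH ℓ (A.1, A.2 + 1) : Fh) = (qH ℓ A : Fh) + 1 := by
  exact_mod_cast idH_up1 ℓ A
lemma cH_up2 : (qH ℓ (A.1 + 1, A.2) : Fh) = (qH ℓ A : Fh) + 1 := by
  exact_mod_cast idH_up2 ℓ A
lemma cH_dn1 : (qH ℓ (A.1, A.2 - 1) : Fh) = (qH ℓ A : Fh) - 1 := by
  exact_mod_cast idH_dn1 ℓ A
lemma cH_dn2 : (qH ℓ (A.1 - 1, A.2) : Fh) = (qH ℓ A : Fh) - 1 := by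
  exact_mod_cast idH_dn2 ℓ A
lemma cEY1 : (qY1 ℓ (A.1 + 1, A.2 + 1) : Fh) = (qY1 ℓ A : Fh) - (qX2 ℓ A : Fh) := by
  exact_mod_cast idEY1 ℓ A
lemma cEY2 : (qY2 ℓ (A.1 + 1, A.2 + 1) : Fh) = (qY2 ℓ A : Fh) - (qX1 ℓ A : Fh) := by
  exact_mod_cast idEY2 ℓ A
lemma cFY1 : (qY1 ℓ A : Fh) * (qF ℓ (A.1, A.2 - 1) : Fh)
    = (qF ℓ A : Fh) * (qY1 ℓ (A.1 - 1, A.2 - 1) : Fh) := by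
  exact_mod_cast idFY1 ℓ A
lemma cFY2 : (qY2 ℓ A : Fh) * (qF ℓ (A.1 - 1, A.2) : Fh)
    = (qF ℓ A : Fh) * (qY2 ℓ (A.1 - 1, A.2 - 1) : Fh) := by
  exact_mod_cast idFY2 ℓ A
lemma cFX1 : (qX1 ℓ A : Fh) * (qF ℓ (A.1, A.2 + 1) : Fh)
    - (qF ℓ A : Fh) * (qX1 ℓ (A.1 - 1, A.2 - 1) : Fh) = (qY2 ℓ A : Fh) := by
  exact_mod_cast idFX1 ℓ A
lemma cFX2 : (qX2 ℓ A : Fh) * (qF ℓ (A.1 + 1, A.2) : Fh)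
    - (qF ℓ A : Fh) * (qX2 ℓ (A.1 - 1, A.2 - 1) : Fh) = (qY1 ℓ A : Fh) := by
  exact_mod_cast idFX2 ℓ A

end CastIds

/-! ### The relations on `Wfree` -/


lemma wrel_EX (ℓ : ℕ) : wE ∘ₗ wX ℓ - wX ℓ ∘ₗ wE = 0 := by
  apply Finsupp.lhom_ext
  intro A b
  simp only [LinearMap.sub_apply, LinearMap.comp_apply, LinearMap.zero_apply, wE, wX,
    Finsupp.lsum_single, LinearMap.toSpanSingleton_apply, smul_add, smul_smul,
    map_add, map_smul, sub_add_cancel, add_sub_cancel_right]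
  ext B
  simp only [Finsupp.coe_add, Finsupp.coe_sub, Finsupp.coe_smul, Finsupp.coe_zero,
    Pi.add_apply, Pi.sub_apply, Pi.smul_apply, Pi.zero_apply, Finsupp.single_apply,
    smul_eq_mul, mul_ite, mul_one, mul_zero]
  split_ifs with h1 h2 <;>
    first
      | (exfalso; rw [← h1] at h2; simp only [Prod.mk.injEq] at h2; omega)
      | (simp only [cX1_shift, cX2_shift]; ring)
      | ring

lemma wrel_HX (ℓ : ℕ) : wH ℓ ∘ₗ wX ℓ - wX ℓ ∘ₗ wH ℓ = hb • wX ℓ := by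
  apply Finsupp.lhom_ext
  intro A b
  simp only [LinearMap.sub_apply, LinearMap.comp_apply, LinearMap.smul_apply, wH, wX,
    Finsupp.lsum_single, LinearMap.toSpanSingleton_apply, smul_add, smul_smul,
    map_add, map_smul, sub_add_cancel, add_sub_cancel_right]
  ext B
  simp only [Finsupp.coe_add, Finsupp.coe_sub, Finsupp.coe_smul, Pi.add_apply, Pi.sub_apply,
    Pi.smul_apply, Finsupp.single_apply, smul_eq_mul, mul_ite, mul_one, mul_zero]
  split_ifs with h1 h2 <;>
    first
      | (exfalso; rw [← h1] at h2; simp only [Prod.mk.injEq] at h2; omega)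
      | (simp only [cH_up1, cH_up2]; ring)
      | ring

lemma wrel_HY (ℓ : ℕ) : wH ℓ ∘ₗ wY ℓ - wY ℓ ∘ₗ wH ℓ = -(hb • wY ℓ) := by
  apply Finsupp.lhom_ext
  intro A b
  simp only [LinearMap.sub_apply, LinearMap.comp_apply, LinearMap.smul_apply,
    LinearMap.neg_apply, wH, wY,
    Finsupp.lsum_single, LinearMap.toSpanSingleton_apply, smul_add, smul_smul,
    map_add, map_smul, sub_add_cancel, add_sub_cancel_right]
  ext B
  simp only [Finsupp.coe_add, Finsupp.coe_sub, Finsupp.coe_smul, Finsupp.coe_neg,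
    Pi.add_apply, Pi.sub_apply, Pi.neg_apply,
    Pi.smul_apply, Finsupp.single_apply, smul_eq_mul, mul_ite, mul_one, mul_zero]
  split_ifs with h1 h2 <;>
    first
      | (exfalso; rw [← h1] at h2; simp only [Prod.mk.injEq] at h2; omega)
      | (simp only [cH_dn1, cH_dn2]; ring)
      | ring

lemma wrel_EY (ℓ : ℕ) : wE ∘ₗ wY ℓ - wY ℓ ∘ₗ wE = hb • wX ℓ := by
  apply Finsupp.lhom_ext
  intro A b
  simp only [LinearMap.sub_apply, LinearMap.comp_apply, LinearMap.smul_apply, wE, wY, wX,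
    Finsupp.lsum_single, LinearMap.toSpanSingleton_apply, smul_add, smul_smul,
    map_add, map_smul, sub_add_cancel, add_sub_cancel_right]
  ext B
  simp only [Finsupp.coe_add, Finsupp.coe_sub, Finsupp.coe_smul, Pi.add_apply, Pi.sub_apply,
    Pi.smul_apply, Finsupp.single_apply, smul_eq_mul, mul_ite, mul_one, mul_zero]
  split_ifs with h1 h2 <;>
    first
      | (exfalso; rw [← h1] at h2; simp only [Prod.mk.injEq] at h2; omega)
      | (simp only [cEY1, cEY2]; ring)
      | ring

lemma wrel_FY (ℓ : ℕ) : wF ℓ ∘ₗ wY ℓ - wY ℓ ∘ₗ wF ℓ = 0 := by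
  apply Finsupp.lhom_ext
  intro A b
  simp only [LinearMap.sub_apply, LinearMap.comp_apply, LinearMap.zero_apply, wF, wY,
    Finsupp.lsum_single, LinearMap.toSpanSingleton_apply, smul_add, smul_smul,
    map_add, map_smul, sub_add_cancel, add_sub_cancel_right]
  ext B
  simp only [Finsupp.coe_add, Finsupp.coe_sub, Finsupp.coe_smul, Finsupp.coe_zero,
    Pi.add_apply, Pi.sub_apply, Pi.zero_apply,
    Pi.smul_apply, Finsupp.single_apply, smul_eq_mul, mul_ite, mul_one, mul_zero]
  split_ifs with h1 h2 <;>
    first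
      | (exfalso; rw [← h1] at h2; simp only [Prod.mk.injEq] at h2; omega)
      | (linear_combination (b * hb ^ 3) * cFY1 ℓ A + (b * hb ^ 3) * cFY2 ℓ A)
      | (linear_combination (b * hb ^ 3) * cFY1 ℓ A)
      | (linear_combination (b * hb ^ 3) * cFY2 ℓ A)
      | (linear_combination (-(b * hb ^ 3)) * cFY1 ℓ A)
      | (linear_combination (-(b * hb ^ 3)) * cFY2 ℓ A)
      | ring

lemma wrel_FX (ℓ : ℕ) : wF ℓ ∘ₗ wX ℓ - wX ℓ ∘ₗ wF ℓ = hb • wY ℓ := by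
  apply Finsupp.lhom_ext
  intro A b
  simp only [LinearMap.sub_apply, LinearMap.comp_apply, LinearMap.smul_apply, wF, wX, wY,
    Finsupp.lsum_single, LinearMap.toSpanSingleton_apply, smul_add, smul_smul,
    map_add, map_smul, sub_add_cancel, add_sub_cancel_right]
  ext B
  simp only [Finsupp.coe_add, Finsupp.coe_sub, Finsupp.coe_smul, Pi.add_apply, Pi.sub_apply,
    Pi.smul_apply, Finsupp.single_apply, smul_eq_mul, mul_ite, mul_one, mul_zero]
  split_ifs with h1 h2 <;>
    first
      | (exfalso; rw [← h1] at h2; simp only [Prod.mk.injEq] at h2; omega)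
      | (linear_combination (b * hb ^ 2) * cFX1 ℓ A + (b * hb ^ 2) * cFX2 ℓ A)
      | (linear_combination (b * hb ^ 2) * cFX1 ℓ A)
      | (linear_combination (b * hb ^ 2) * cFX2 ℓ A)
      | (linear_combination (-(b * hb ^ 2)) * cFX1 ℓ A)
      | (linear_combination (-(b * hb ^ 2)) * cFX2 ℓ A)
      | ring

/-! ### The inclusion `V → Wfree` and equivariance -/

def iota (ℓ : ℕ) : V ℓ →ₗ[Fh] Wfree := Finsupp.lmapDomain Fh Fh Subtype.val

lemma iota_inj (ℓ : ℕ) : Function.Injective (iota ℓ) := fun x y hxy =>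
  Finsupp.mapDomain_injective Subtype.val_injective
    (by simpa [iota, Finsupp.lmapDomain_apply] using hxy)

lemma iota_single (ℓ : ℕ) (a : {A : ℤ × ℤ // Adm ℓ A}) (c : Fh) :
    iota ℓ (Finsupp.single a c) = Finsupp.single (a : ℤ × ℤ) c := by
  simp [iota]

lemma iota_ket (ℓ : ℕ) {B : ℤ × ℤ} (h : Adm ℓ B) :
    iota ℓ (ket ℓ B) = Finsupp.single B 1 := by
  rw [ket, dif_pos h, iota_single]

lemma smul_iota_ket (ℓ : ℕ) (c : Fh) (B : ℤ × ℤ) (hc : ¬ Adm ℓ B → c = 0) :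
    c • iota ℓ (ket ℓ B) = c • Finsupp.single B (1 : Fh) := by
  by_cases h : Adm ℓ B
  · rw [iota_ket ℓ h]
  · rw [hc h, zero_smul, zero_smul]

/-! ### boundary vanishing -/

lemma zX1 (ℓ : ℕ) {A : ℤ × ℤ} (hA : Adm ℓ A) (h : ¬ Adm ℓ (A.1, A.2 + 1)) :
    (qX1 ℓ A : Fh) = 0 := by
  have hv : A.2 = A.1 + (2 * ℓ + 1) := by
    unfold Adm at hA h; push_neg at h; omega
  rw [Rat.cast_eq_zero]
  unfold qX1
  rw [div_eq_zero_iff]; left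
  rw [hv]; push_cast; ring

lemma zX2 (ℓ : ℕ) {A : ℤ × ℤ} (hA : Adm ℓ A) (h : ¬ Adm ℓ (A.1 + 1, A.2)) :
    (qX2 ℓ A : Fh) = 0 := by
  have hv : A.2 = A.1 := by unfold Adm at hA h; push_neg at h; omega
  rw [Rat.cast_eq_zero]
  unfold qX2
  rw [div_eq_zero_iff]; left
  rw [hv]; push_cast; ring

lemma zY1 (ℓ : ℕ) {A : ℤ × ℤ} (hA : Adm ℓ A) (h : ¬ Adm ℓ (A.1, A.2 - 1)) :
    (qY1 ℓ A : Fh) = 0 := by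
  have hv : A.2 = A.1 := by unfold Adm at hA h; push_neg at h; omega
  rw [Rat.cast_eq_zero]
  unfold qY1
  rw [div_eq_zero_iff]; left
  rw [hv]; push_cast; ring

lemma zY2 (ℓ : ℕ) {A : ℤ × ℤ} (hA : Adm ℓ A) (h : ¬ Adm ℓ (A.1 - 1, A.2)) :
    (qY2 ℓ A : Fh) = 0 := by
  have hv : A.1 = 0 ∨ A.2 = A.1 + (2 * ℓ + 1) := by
    unfold Adm at hA h; push_neg at h; omega
  rw [Rat.cast_eq_zero]
  unfold qY2
  rw [div_eq_zero_iff]; left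
  rcases hv with hv | hv <;> (rw [hv]; push_cast; ring)

lemma zF (ℓ : ℕ) {A : ℤ × ℤ} (hA : Adm ℓ A) (h : ¬ Adm ℓ (A.1 - 1, A.2 - 1)) :
    (qF ℓ A : Fh) = 0 := by
  have hv : A.1 = 0 := by unfold Adm at hA h; push_neg at h; omega
  rw [Rat.cast_eq_zero]
  unfold qF
  rw [hv]; push_cast; ring

/-! ### normal forms of the `V`-operators on basis vectors -/

lemma opE_single (ℓ : ℕ) (A : ℤ × ℤ) (hA : Adm ℓ A) (b : Fh) :
    opE ℓ (Finsupp.single ⟨A, hA⟩ b) = b • ket ℓ (A.1 + 1, A.2 + 1) := by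
  simp only [opE, Finsupp.lsum_single, LinearMap.toSpanSingleton_apply]

lemma opF_single (ℓ : ℕ) (A : ℤ × ℤ) (hA : Adm ℓ A) (b : Fh) :
    opF ℓ (Finsupp.single ⟨A, hA⟩ b) =
      b • (((qF ℓ A : Fh) * hb ^ 2) • ket ℓ (A.1 - 1, A.2 - 1)) := by
  simp only [opF, Finsupp.lsum_single, LinearMap.toSpanSingleton_apply, qF]

lemma opH_single (ℓ : ℕ) (A : ℤ × ℤ) (hA : Adm ℓ A) (b : Fh) :
    opH ℓ (Finsupp.single ⟨A, hA⟩ b) =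
      b • (((qH ℓ A : Fh) * hb) • ket ℓ (A.1, A.2)) := by
  simp only [opH, Finsupp.lsum_single, LinearMap.toSpanSingleton_apply, qH]

lemma opX_single (ℓ : ℕ) (A : ℤ × ℤ) (hA : Adm ℓ A) (b : Fh) :
    opX ℓ (Finsupp.single ⟨A, hA⟩ b) =
      b • ((qX1 ℓ A : Fh) • ket ℓ (A.1, A.2 + 1) + (qX2 ℓ A : Fh) • ket ℓ (A.1 + 1, A.2)) := by
  simp only [opX, Finsupp.lsum_single, LinearMap.toSpanSingleton_apply, qX1, qX2, qden]

lemma opY_single (ℓ : ℕ) (A : ℤ × ℤ) (hA : Adm ℓ A) (b : Fh) :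
    opY ℓ (Finsupp.single ⟨A, hA⟩ b) =
      b • (((qY1 ℓ A : Fh) * hb) • ket ℓ (A.1, A.2 - 1) +
           ((qY2 ℓ A : Fh) * hb) • ket ℓ (A.1 - 1, A.2)) := by
  simp only [opY, Finsupp.lsum_single, LinearMap.toSpanSingleton_apply, qY1, qY2, qden]

/-! ### equivariance -/

lemma iota_opE (ℓ : ℕ) : iota ℓ ∘ₗ opE ℓ = wE ∘ₗ iota ℓ := by
  apply Finsupp.lhom_ext
  rintro ⟨A, hA⟩ b
  have hadm : Adm ℓ (A.1 + 1, A.2 + 1) := by unfold Adm at hA ⊢; omega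
  simp only [LinearMap.comp_apply, iota_single, opE_single ℓ A hA, wE, Finsupp.lsum_single,
    LinearMap.toSpanSingleton_apply, map_smul, iota_ket ℓ hadm]

lemma iota_opH (ℓ : ℕ) : iota ℓ ∘ₗ opH ℓ = wH ℓ ∘ₗ iota ℓ := by
  apply Finsupp.lhom_ext
  rintro ⟨A, hA⟩ b
  have hadm : Adm ℓ (A.1, A.2) := hA
  simp only [LinearMap.comp_apply, iota_single, opH_single ℓ A hA, wH, Finsupp.lsum_single,
    LinearMap.toSpanSingleton_apply, map_smul, iota_ket ℓ hadm]

lemma iota_opF (ℓ : ℕ) : iota ℓ ∘ₗ opF ℓ = wF ℓ ∘ₗ iota ℓ := by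
  apply Finsupp.lhom_ext
  rintro ⟨A, hA⟩ b
  simp only [LinearMap.comp_apply, iota_single, opF_single ℓ A hA, wF, Finsupp.lsum_single,
    LinearMap.toSpanSingleton_apply, map_smul]
  congr 1
  exact smul_iota_ket ℓ _ _ (fun h => by rw [zF ℓ hA h, zero_mul])

lemma iota_opX (ℓ : ℕ) : iota ℓ ∘ₗ opX ℓ = wX ℓ ∘ₗ iota ℓ := by
  apply Finsupp.lhom_ext
  rintro ⟨A, hA⟩ b
  simp only [LinearMap.comp_apply, iota_single, opX_single ℓ A hA, wX, Finsupp.lsum_single,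
    LinearMap.toSpanSingleton_apply, map_smul, map_add]
  congr 1
  rw [smul_iota_ket ℓ _ _ (zX1 ℓ hA), smul_iota_ket ℓ _ _ (zX2 ℓ hA)]

lemma iota_opY (ℓ : ℕ) : iota ℓ ∘ₗ opY ℓ = wY ℓ ∘ₗ iota ℓ := by
  apply Finsupp.lhom_ext
  rintro ⟨A, hA⟩ b
  simp only [LinearMap.comp_apply, iota_single, opY_single ℓ A hA, wY, Finsupp.lsum_single,
    LinearMap.toSpanSingleton_apply, map_smul, map_add]
  congr 1
  rw [smul_iota_ket ℓ _ _ (fun h => by rw [zY1 ℓ hA h, zero_mul]),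
      smul_iota_ket ℓ _ _ (fun h => by rw [zY2 ℓ hA h, zero_mul])]

/-! ### transfer -/

lemma transfer {ℓ : ℕ} {f g : V ℓ →ₗ[Fh] V ℓ} (h : iota ℓ ∘ₗ f = iota ℓ ∘ₗ g) : f = g :=
  LinearMap.ext fun v => iota_inj ℓ (LinearMap.congr_fun h v)

lemma conj_comp {ℓ : ℕ} {f g : V ℓ →ₗ[Fh] V ℓ} {F G : Wfree →ₗ[Fh] Wfree}
    (hf : iota ℓ ∘ₗ f = F ∘ₗ iota ℓ) (hg : iota ℓ ∘ₗ g = G ∘ₗ iota ℓ) :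
    iota ℓ ∘ₗ (f ∘ₗ g) = (F ∘ₗ G) ∘ₗ iota ℓ := by
  rw [← LinearMap.comp_assoc, hf, LinearMap.comp_assoc, hg, ← LinearMap.comp_assoc]

lemma conj_sub {ℓ : ℕ} {f g : V ℓ →ₗ[Fh] V ℓ} {F G : Wfree →ₗ[Fh] Wfree}
    (hf : iota ℓ ∘ₗ f = F ∘ₗ iota ℓ) (hg : iota ℓ ∘ₗ g = G ∘ₗ iota ℓ) :
    iota ℓ ∘ₗ (f - g) = (F - G) ∘ₗ iota ℓ := by
  apply LinearMap.ext; intro v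
  have h1 := LinearMap.congr_fun hf v
  have h2 := LinearMap.congr_fun hg v
  simp only [LinearMap.comp_apply, LinearMap.sub_apply, map_sub] at *
  rw [h1, h2]

lemma conj_smul {ℓ : ℕ} {f : V ℓ →ₗ[Fh] V ℓ} {F : Wfree →ₗ[Fh] Wfree} (c : Fh)
    (hf : iota ℓ ∘ₗ f = F ∘ₗ iota ℓ) :
    iota ℓ ∘ₗ (c • f) = (c • F) ∘ₗ iota ℓ := by
  apply LinearMap.ext; intro v
  have h1 := LinearMap.congr_fun hf v
  simp only [LinearMap.comp_apply, LinearMap.smul_apply, map_smul] at *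
  rw [h1]

lemma conj_neg {ℓ : ℕ} {f : V ℓ →ₗ[Fh] V ℓ} {F : Wfree →ₗ[Fh] Wfree}
    (hf : iota ℓ ∘ₗ f = F ∘ₗ iota ℓ) :
    iota ℓ ∘ₗ (-f) = (-F) ∘ₗ iota ℓ := by
  apply LinearMap.ext; intro v
  have h1 := LinearMap.congr_fun hf v
  simp only [LinearMap.comp_apply, LinearMap.neg_apply, map_neg] at *
  rw [h1]

lemma conj_zero {ℓ : ℕ} :
    iota ℓ ∘ₗ (0 : V ℓ →ₗ[Fh] V ℓ) = (0 : Wfree →ₗ[Fh] Wfree) ∘ₗ iota ℓ := by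
  apply LinearMap.ext; intro v; simp

/-- the relations `[E,X] = 0`, `[F,Y] = 0`, `[H,X] = ℏX`, `[H,Y] = -ℏY`,
`[E,Y] = ℏX` and `[F,X] = ℏY` hold on `V`. -/
theorem stmt8 (ℓ : ℕ) :
    opE ℓ ∘ₗ opX ℓ - opX ℓ ∘ₗ opE ℓ = 0 ∧
    opF ℓ ∘ₗ opY ℓ - opY ℓ ∘ₗ opF ℓ = 0 ∧
    opH ℓ ∘ₗ opX ℓ - opX ℓ ∘ₗ opH ℓ = hb • opX ℓ ∧
    opH ℓ ∘ₗ opY ℓ - opY ℓ ∘ₗ opH ℓ = -(hb • opY ℓ) ∧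
    opE ℓ ∘ₗ opY ℓ - opY ℓ ∘ₗ opE ℓ = hb • opX ℓ ∧
    opF ℓ ∘ₗ opX ℓ - opX ℓ ∘ₗ opF ℓ = hb • opY ℓ := by
  refine ⟨?_, ?_, ?_, ?_, ?_, ?_⟩
  · apply transfer
    rw [conj_sub (conj_comp (iota_opE ℓ) (iota_opX ℓ)) (conj_comp (iota_opX ℓ) (iota_opE ℓ)),
      wrel_EX, conj_zero]
  · apply transfer
    rw [conj_sub (conj_comp (iota_opF ℓ) (iota_opY ℓ)) (conj_comp (iota_opY ℓ) (iota_opF ℓ)),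
      wrel_FY, conj_zero]
  · apply transfer
    rw [conj_sub (conj_comp (iota_opH ℓ) (iota_opX ℓ)) (conj_comp (iota_opX ℓ) (iota_opH ℓ)),
      wrel_HX, conj_smul hb (iota_opX ℓ)]
  · apply transfer
    rw [conj_sub (conj_comp (iota_opH ℓ) (iota_opY ℓ)) (conj_comp (iota_opY ℓ) (iota_opH ℓ)),
      wrel_HY, conj_neg (conj_smul hb (iota_opY ℓ))]
  · apply transfer
    rw [conj_sub (conj_comp (iota_opE ℓ) (iota_opY ℓ)) (conj_comp (iota_opY ℓ) (iota_opE ℓ)),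
      wrel_EY, conj_smul hb (iota_opX ℓ)]
  · apply transfer
    rw [conj_sub (conj_comp (iota_opF ℓ) (iota_opX ℓ)) (conj_comp (iota_opX ℓ) (iota_opF ℓ)),
      wrel_FX, conj_smul hb (iota_opY ℓ)]
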